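/- arXiv:1811.12559 — 5 statements merged into one kernel-verified Lean document; each statement's English description precedes it below -/
import Mathlib

section
/- Fix p, q ∈ ℝ² unit vectors and a ∈ ℝ, and define F(θ) = a + 2 p ∧ π_{V_θ}(q). Then for every θ, |F′(θ)/2|² + |F″(θ)/4|² = 1. -/
open Real MeasureTheory

noncomputable section

/-- Points of the plane. -/
abbrev Pt := ℝ × ℝ
/-- Points of the Heisenberg group ℍ ≅ ℂ × ℝ ≅ ℝ² × ℝ. -/
abbrev Heis := (ℝ × ℝ) × ℝ

/-- Wedge product on ℝ². -/
def wedge (z w : Pt) : ℝ := z.1 * w.2 - z.2 * w.1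

/-- Euclidean inner product on ℝ². -/
def dotP (z w : Pt) : ℝ := z.1 * w.1 + z.2 * w.2

/-- Euclidean norm on ℝ². -/
def nrm (z : Pt) : ℝ := Real.sqrt (z.1 ^ 2 + z.2 ^ 2)

/-- The unit vector e^{iθ} = (cos θ, sin θ). -/
def eV (θ : ℝ) : Pt := (Real.cos θ, Real.sin θ)

/-- The unit vector i·e^{iθ} = (−sin θ, cos θ). -/
def ieV (θ : ℝ) : Pt := (-Real.sin θ, Real.cos θ)

/-- Orthogonal projection onto the line V_θ spanned by e^{iθ}. -/
def projV (θ : ℝ) (z : Pt) : Pt := (dotP z (eV θ)) • eV θ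

/-- Orthogonal projection onto the orthogonal complement V_θ^⊥, spanned by i·e^{iθ}. -/
def projVperp (θ : ℝ) (z : Pt) : Pt := (dotP z (ieV θ)) • ieV θ

/-- Heisenberg group law. -/
def hmul (v w : Heis) : Heis := (v.1 + w.1, v.2 + w.2 - 2 * wedge v.1 w.1)

/-- Heisenberg group inverse. -/
def hinv (v : Heis) : Heis := (-v.1, -v.2)

/-- Korányi norm ‖(z,t)‖ = (|z|⁴ + t²)^{1/4}. -/
def Knorm (v : Heis) : ℝ := ((nrm v.1) ^ 4 + v.2 ^ 2) ^ ((1 : ℝ) / 4)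

/-- Korányi distance (via the explicit second-component formula). -/
def dH (v w : Heis) : ℝ :=
  ((nrm (v.1 - w.1)) ^ 4 + (v.2 - w.2 - 2 * wedge v.1 w.1) ^ 2) ^ ((1 : ℝ) / 4)

/-- Horizontal projection P_{V_θ}. -/
def PV (θ : ℝ) (v : Heis) : Heis := (projV θ v.1, 0)

/-- Vertical projection P_{V_θ^⊥}. -/
def PVperp (θ : ℝ) (v : Heis) : Heis :=
  (projVperp θ v.1, v.2 - 2 * wedge (projV θ v.1) (projVperp θ v.1))


lemma hd_trig (A B c : ℝ) (θ : ℝ) :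
    HasDerivAt (fun x => c + (A * Real.sin (2*x) + B * Real.cos (2*x)))
      (2*A * Real.cos (2*θ) + (-(2*B)) * Real.sin (2*θ)) θ := by
  have h2 : HasDerivAt (fun x : ℝ => 2*x) 2 θ := by
    simpa using (hasDerivAt_id θ).const_mul 2
  have hs : HasDerivAt (fun x => Real.sin (2*x)) (Real.cos (2*θ) * 2) θ :=
    (Real.hasDerivAt_sin (2*θ)).comp θ h2
  have hc : HasDerivAt (fun x => Real.cos (2*x)) (-Real.sin (2*θ) * 2) θ :=
    (Real.hasDerivAt_cos (2*θ)).comp θ h2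
  have := ((hs.const_mul A).add (hc.const_mul B)).const_add c
  exact this.congr_deriv (by ring)

/-- For F(θ) = a + 2 p ∧ π_{V_θ}(q) with p, q unit vectors:
|F′(θ)/2|² + |F″(θ)/4|² = 1. -/
theorem stmt_7 (p q : Pt) (hp : nrm p = 1) (hq : nrm q = 1) (a : ℝ)
    (F : ℝ → ℝ) (hF : ∀ θ, F θ = a + 2 * wedge p (projV θ q)) (θ : ℝ) :
    |deriv F θ / 2| ^ 2 + |deriv (deriv F) θ / 4| ^ 2 = 1 := by 
  have hp2 : p.1 ^ 2 + p.2 ^ 2 = 1 := by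
    have := hp; rw [nrm, Real.sqrt_eq_one] at this; exact this
  have hq2 : q.1 ^ 2 + q.2 ^ 2 = 1 := by
    have := hq; rw [nrm, Real.sqrt_eq_one] at this; exact this
  set A : ℝ := q.1 * p.1 - q.2 * p.2 with hA
  set B : ℝ := -(q.2 * p.1 + q.1 * p.2) with hB
  set c : ℝ := a + (q.2 * p.1 - q.1 * p.2) with hc
  have hFeq : F = fun x => c + (A * Real.sin (2*x) + B * Real.cos (2*x)) := by
    funext x
    rw [hF]
    simp only [wedge, projV, dotP, eV, Prod.smul_fst, Prod.smul_snd, smul_eq_mul,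
      Real.sin_two_mul, Real.cos_two_mul']
    linear_combination (p.1 * q.2 - q.1 * p.2) * (Real.sin_sq_add_cos_sq x)
  have hF1 : deriv F = fun x => 0 + ((2*A) * Real.sin (2*x + π/2) + (2*B) * Real.cos (2*x + π/2)) := by
    funext x
    rw [hFeq, (hd_trig A B c x).deriv]
    simp [Real.sin_add, Real.cos_add]
  have hF1' : deriv F θ = 2*A * Real.cos (2*θ) - 2*B * Real.sin (2*θ) := by
    rw [hF1]; simp [Real.sin_add, Real.cos_add]; ring
  have hF2 : deriv (deriv F) θ = 2*(2*A) * Real.cos (2*θ + π/2) + (-(2*(2*B))) * Real.sin (2*θ + π/2) := by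
    rw [hF1]
    have h2 : HasDerivAt (fun x : ℝ => 2*x + π/2) 2 θ := by
      simpa using ((hasDerivAt_id θ).const_mul 2).add_const (π/2)
    have hs : HasDerivAt (fun x => Real.sin (2*x + π/2)) (Real.cos (2*θ + π/2) * 2) θ :=
      (Real.hasDerivAt_sin _).comp θ h2
    have hcd : HasDerivAt (fun x => Real.cos (2*x + π/2)) (-Real.sin (2*θ + π/2) * 2) θ :=
      (Real.hasDerivAt_cos _).comp θ h2
    have := (((hs.const_mul (2*A)).add (hcd.const_mul (2*B))).const_add 0).deriv
    exact this.trans (by ring)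
  have hF2' : deriv (deriv F) θ = -(4*A) * Real.sin (2*θ) - 4*B * Real.cos (2*θ) := by
    rw [hF2]; simp [Real.sin_add, Real.cos_add]; ring
  rw [hF1', hF2', sq_abs, sq_abs]
  have hsc : Real.sin (2*θ) ^ 2 + Real.cos (2*θ) ^ 2 = 1 := Real.sin_sq_add_cos_sq _
  have hAB : A ^ 2 + B ^ 2 = 1 := by
    rw [hA, hB]; nlinarith [hp2, hq2]
  linear_combination (A^2 + B^2) * hsc + hAB
end
end

section
/- Let F: ℝ → ℝ be twice continuously differentiable with |F′(θ)/2|² + |F″(θ)/4|² = 1 for all θ. Then for any b ∈ ℝ and any interval I of length strictly less than 1/2, the equation F(θ) = b has at most 2 solutions in I. -/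
open Real MeasureTheory

noncomputable section

/-- If F is C² with |F′/2|² + |F″/4|² ≡ 1, then F(θ) = b has at most 2 solutions
in any interval of length strictly less than 1/2. -/
theorem stmt_9 (F : ℝ → ℝ) (hF : ContDiff ℝ 2 F)
    (hid : ∀ θ : ℝ, (deriv F θ / 2) ^ 2 + (deriv (deriv F) θ / 4) ^ 2 = 1)
    (b : ℝ) (a c : ℝ) (hlen : c - a < 1 / 2) :
    Set.encard {θ ∈ Set.Icc a c | F θ = b} ≤ 2 := by
  set S := {θ ∈ Set.Icc a c | F θ = b} with hS
  have hd1 : Differentiable ℝ F := hF.differentiable (by norm_num)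
  have h2 : ContDiff ℝ ((1:ℕ∞)+1) F := by exact_mod_cast hF
  have hd2 : Differentiable ℝ (deriv F) := (contDiff_succ_iff_deriv.mp h2).2.2.differentiable (by simp)
  have key : ∀ x y z, x ∈ S → y ∈ S → z ∈ S → x < y → y < z → False := by
    intro x y z hx hy hz hxy hyz
    obtain ⟨hxI, hxb⟩ := hx
    obtain ⟨hyI, hyb⟩ := hy
    obtain ⟨hzI, hzb⟩ := hz
    obtain ⟨ξ₁, hξ₁m, hξ₁⟩ := exists_deriv_eq_zero hxy hd1.continuous.continuousOn
      (hxb.trans hyb.symm)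
    obtain ⟨ξ₂, hξ₂m, hξ₂⟩ := exists_deriv_eq_zero hyz hd1.continuous.continuousOn
      (hyb.trans hzb.symm)
    have hξξ : ξ₁ < ξ₂ := hξ₁m.2.trans hξ₂m.1
    obtain ⟨η, hηm, hη⟩ := exists_deriv_eq_zero hξξ hd2.continuous.continuousOn
      (hξ₁.trans hξ₂.symm)
    -- |F'(η)| = 2
    have hη2 : (deriv F η) ^ 2 = 4 := by have := hid η; nlinarith
    -- MVT on [ξ₁, η]
    obtain ⟨m, hmm, hm⟩ := exists_deriv_eq_slope (deriv F) hηm.1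
      hd2.continuous.continuousOn (hd2.differentiableOn)
    have hm4 : (deriv (deriv F) m) ^ 2 ≤ 16 := by have := hid m; nlinarith
    have h1 : η - ξ₁ > 0 := by linarith [hηm.1]
    have hslope : deriv F η = deriv (deriv F) m * (η - ξ₁) := by
      rw [hm, hξ₁]
      field_simp
      ring
    have h2' : η - ξ₁ ≤ c - a := by
      have h3 := hξ₁m.1; have h4 := hηm.2; have h5 := hξ₂m.2
      have hxc := hxI.1; have hzc := hzI.2
      linarith
    have hsq : (deriv F η) ^ 2 = (deriv (deriv F) m) ^ 2 * (η - ξ₁) ^ 2 := by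
      rw [hslope]; ring
    have hs2 : (η - ξ₁) ^ 2 < 1 / 4 := by nlinarith
    nlinarith [mul_le_mul_of_nonneg_right hm4 (sq_nonneg (η - ξ₁))]
  by_contra h
  push_neg at h
  obtain ⟨t, hts, ht3⟩ := Set.exists_subset_encard_eq (show (3:ℕ∞) ≤ S.encard by
    exact Order.add_one_le_of_lt h)
  obtain ⟨x, y, z, hxy, hxz, hyz, rfl⟩ := Set.encard_eq_three.mp ht3
  have hx : x ∈ S := hts (show x ∈ ({x,y,z}:Set ℝ) by simp)
  have hy : y ∈ S := hts (show y ∈ ({x,y,z}:Set ℝ) by simp)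
  have hz : z ∈ S := hts (show z ∈ ({x,y,z}:Set ℝ) by simp)
  rcases lt_trichotomy x y with h1 | h1 | h1
  · rcases lt_trichotomy y z with h2 | h2 | h2
    · exact key x y z hx hy hz h1 h2
    · exact hyz h2
    · rcases lt_trichotomy x z with h3 | h3 | h3
      · exact key x z y hx hz hy h3 h2
      · exact hxz h3
      · exact key z x y hz hx hy h3 h1
  · exact hxy h1
  · rcases lt_trichotomy x z with h2 | h2 | h2
    · exact key y x z hy hx hz h1 h2
    · exact hxz h2
    · rcases lt_trichotomy y z with h3 | h3 | h3
      · exact key y z x hy hz hx h3 h2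
      · exact hyz h3
      · exact key z y x hz hy hx h3 h1
end
end

section
/- For any v = (z,t), w = (ζ,τ) ∈ ℍ and θ ∈ [0,π), if z ≠ ±ζ then d_ℍ(P_{V_θ^⊥}(v), P_{V_θ^⊥}(w)) ≥ |z+ζ|^{1/2} |z−ζ|^{1/2} |a + 2p ∧ π_{V_θ}(q)|^{1/2}, where a = (t−τ−2z∧ζ)/(|z+ζ| |z−ζ|), p = (z−ζ)/|z−ζ|, q = (z+ζ)/|z+ζ|. -/
open Real MeasureTheory

noncomputable section

lemma nrm_pos {z : Pt} (h : z ≠ 0) : 0 < nrm z := by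
  obtain ⟨a, b⟩ := z
  apply Real.sqrt_pos.2
  have h' : ¬(a = 0 ∧ b = 0) := by simpa [Prod.ext_iff] using h
  rcases not_and_or.1 h' with h | h <;> positivity

/-- Lower bound for the distance between vertical projections when z ≠ ±ζ. -/
theorem stmt_13 (v w : Heis) (θ : ℝ) (hθ : θ ∈ Set.Ico 0 Real.pi)
    (h1 : v.1 ≠ w.1) (h2 : v.1 ≠ -w.1) :
    (nrm (v.1 + w.1)) ^ ((1 : ℝ) / 2) * (nrm (v.1 - w.1)) ^ ((1 : ℝ) / 2) *
      |(v.2 - w.2 - 2 * wedge v.1 w.1) / (nrm (v.1 + w.1) * nrm (v.1 - w.1)) +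
        2 * wedge ((nrm (v.1 - w.1))⁻¹ • (v.1 - w.1))
          (projV θ ((nrm (v.1 + w.1))⁻¹ • (v.1 + w.1)))| ^ ((1 : ℝ) / 2)
      ≤ dH (PVperp θ v) (PVperp θ w) := by
  obtain ⟨z, t⟩ := v
  obtain ⟨ζ, τ⟩ := w
  simp only [] at h1 h2 ⊢
  have hN1 : 0 < nrm (z - ζ) := nrm_pos (sub_ne_zero.2 h1)
  have hN2 : 0 < nrm (z + ζ) := nrm_pos (fun h => h2 (by
    have := congrArg Prod.fst h
    have := congrArg Prod.snd h
    simp only [Prod.fst_add, Prod.snd_add, Prod.fst_zero, Prod.snd_zero] at *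
    exact Prod.ext (by simp [Prod.fst_neg]; linarith) (by simp [Prod.snd_neg]; linarith)))
  -- the second component of the projected Korányi distance
  set S : ℝ := ((t, τ).1 - 2 * dotP z (eV θ) * dotP z (ieV θ))
      - ((t, τ).2 - 2 * dotP ζ (eV θ) * dotP ζ (ieV θ)) with hSdef
  have hS2 : (PVperp θ (z, t)).2 - (PVperp θ (ζ, τ)).2
      - 2 * wedge (PVperp θ (z, t)).1 (PVperp θ (ζ, τ)).1 = S := by
    simp only [PVperp, projV, projVperp, wedge, dotP, eV, ieV, Prod.smul_fst, Prod.smul_snd,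
      smul_eq_mul, hSdef]
    linear_combination (-2 * ((Real.cos θ * z.1 + Real.sin θ * z.2) * (-Real.sin θ * z.1 + Real.cos θ * z.2)
      - (Real.cos θ * ζ.1 + Real.sin θ * ζ.2) * (-Real.sin θ * ζ.1 + Real.cos θ * ζ.2))) *
      (Real.sin_sq_add_cos_sq θ)
  -- key identity for the inner absolute value
  have key : (t - τ - 2 * wedge z ζ) / (nrm (z + ζ) * nrm (z - ζ)) +
        2 * wedge ((nrm (z - ζ))⁻¹ • (z - ζ)) (projV θ ((nrm (z + ζ))⁻¹ • (z + ζ)))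
      = S / (nrm (z + ζ) * nrm (z - ζ)) := by
    simp only [projV, wedge, dotP, eV, ieV, Prod.smul_fst, Prod.smul_snd, smul_eq_mul,
      Prod.fst_sub, Prod.snd_sub, Prod.fst_add, Prod.snd_add, hSdef]
    field_simp
    linear_combination (2 * (z.1 * ζ.2 - z.2 * ζ.1)) *
      (Real.sin_sq_add_cos_sq θ)
  rw [key]
  have hLHS : (nrm (z + ζ)) ^ ((1 : ℝ) / 2) * (nrm (z - ζ)) ^ ((1 : ℝ) / 2) *
      |S / (nrm (z + ζ) * nrm (z - ζ))| ^ ((1 : ℝ) / 2) = |S| ^ ((1 : ℝ) / 2) := by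
    rw [abs_div, abs_of_pos (mul_pos hN2 hN1)]
    rw [← Real.mul_rpow hN2.le hN1.le,
      ← Real.mul_rpow (mul_nonneg hN2.le hN1.le) (div_nonneg (abs_nonneg _) (mul_nonneg hN2.le hN1.le))]
    congr 1
    rw [mul_comm]
    exact div_mul_cancel₀ _ (ne_of_gt (mul_pos hN2 hN1))
  rw [hLHS]
  unfold dH
  rw [hS2]
  have habs : |S| ^ ((1 : ℝ) / 2) = (S ^ 2) ^ ((1 : ℝ) / 4) := by
    rw [show (S ^ 2 : ℝ) = |S| ^ (2 : ℕ) by rw [sq_abs], ← Real.rpow_natCast (|S|) 2,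
      ← Real.rpow_mul (abs_nonneg S)]
    norm_num
  rw [habs]
  have hnn : (0 : ℝ) ≤ nrm ((PVperp θ (z, t)).1 - (PVperp θ (ζ, τ)).1) := Real.sqrt_nonneg _
  exact Real.rpow_le_rpow (sq_nonneg S)
    (by nlinarith [pow_nonneg hnn 4]) (by norm_num)
end
end

section
/- Let z, ζ ∈ ℝ² with |z−ζ| ≥ |t−τ−2z∧ζ|^{1/2}, and suppose z ≠ ζ. Then the set {θ ∈ [0,π) : |π_{V_θ^⊥}(z−ζ)| ≤ δ} is contained in at most two intervals each of length at most Cδ/|z−ζ| for an absolute constant C, and consequently {θ : d_ℍ(P_{V_θ^⊥}(v), P_{V_θ^⊥}(w)) ≤ δ} (with v=(z,t), w=(ζ,τ)) is contained in at most two intervals each of length ≲ δ/d_ℍ(v,w). -/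
open Real MeasureTheory

noncomputable section

/-- Jordan-type estimate: if `|sin x| ≤ s` for `x ∈ (-π, π)`, then `x` is within
`π/2 * s` of a multiple of `π`. -/
lemma jordan_abs {x s : ℝ} (hx : -π < x) (hx' : x < π) (hs : |Real.sin x| ≤ s) :
    min |x| (π - |x|) ≤ π / 2 * s := by
  set y := min |x| (π - |x|) with hy
  have hxabs : |x| < π := abs_lt.2 ⟨hx, hx'⟩
  have hy0 : 0 ≤ y := le_min (abs_nonneg x) (by linarith)
  have hy2 : y ≤ π / 2 := by
    rcases le_total |x| (π - |x|) with h | h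
    · have : y = |x| := min_eq_left h
      linarith [this]
    · have : y = π - |x| := min_eq_right h
      linarith [this]
  have hsiny : Real.sin y = |Real.sin x| := by
    have h1 : Real.sin |x| = |Real.sin x| := by
      rcases le_or_gt 0 x with h | h
      · rw [abs_of_nonneg h, abs_of_nonneg (Real.sin_nonneg_of_nonneg_of_le_pi h hx'.le)]
      · rw [abs_of_neg h, Real.sin_neg,
          abs_of_nonpos (Real.sin_nonpos_of_nonpos_of_neg_pi_le h.le hx.le)]
    rcases le_total |x| (π - |x|) with h | h
    · rw [hy, min_eq_left h, h1]
    · rw [hy, min_eq_right h, ← h1, Real.sin_pi_sub]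
  have := Real.mul_le_sin hy0 hy2
  have hpi := Real.pi_pos
  rw [hsiny] at this
  have h2 : 2 / π * y ≤ s := this.trans hs
  calc y = π / 2 * (2 / π * y) := by field_simp
  _ ≤ π / 2 * s := by nlinarith

/-- Covering lemma for `{θ ∈ [0,π) : |sin (θ - φ)| ≤ s}`. -/
lemma key_cover (φ s : ℝ) (hφ0 : 0 ≤ φ) (hφπ : φ < π) (hs : 0 ≤ s) :
    ∃ a₁ b₁ a₂ b₂ : ℝ,
      {θ ∈ Set.Ico 0 π | |Real.sin (θ - φ)| ≤ s} ⊆ Set.Icc a₁ b₁ ∪ Set.Icc a₂ b₂ ∧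
      b₁ - a₁ ≤ 2 * π * s ∧ b₂ - a₂ ≤ 2 * π * s := by
  have hpi := Real.pi_pos
  by_cases hs2 : (1 : ℝ) / 2 ≤ s
  · refine ⟨0, π, 0, 0, ?_, by nlinarith, by nlinarith⟩
    intro θ hθ
    exact Or.inl ⟨hθ.1.1, hθ.1.2.le⟩
  · push_neg at hs2
    set L : ℝ := π / 2 * s with hL
    have hL0 : 0 ≤ L := by positivity
    have hL4 : L ≤ π / 4 := by rw [hL]; nlinarith
    have main : ∀ θ ∈ {θ ∈ Set.Ico 0 π | |Real.sin (θ - φ)| ≤ s},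
        |θ - φ| ≤ L ∨ π - |θ - φ| ≤ L := by
      intro θ ⟨⟨hθ0, hθπ⟩, hsin⟩
      have h1 : -π < θ - φ := by linarith
      have h2 : θ - φ < π := by linarith
      have := jordan_abs h1 h2 hsin
      rcases le_total |θ - φ| (π - |θ - φ|) with h | h
      · exact Or.inl (by rw [min_eq_left h] at this; exact this)
      · exact Or.inr (by rw [min_eq_right h] at this; exact this)
    by_cases hφ : φ < π / 2
    · refine ⟨φ - L, φ + L, φ + π - L, φ + π + L, ?_, by linarith, by linarith⟩
      intro θ hθ
      have hθ0 := hθ.1.1; have hθπ := hθ.1.2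
      rcases main θ hθ with h | h
      · rcases abs_le.1 h with ⟨h1, h2⟩
        exact Or.inl ⟨by linarith, by linarith⟩
      · rcases le_or_gt 0 (θ - φ) with h0 | h0
        · rw [abs_of_nonneg h0] at h
          exact Or.inr ⟨by linarith, by linarith⟩
        · rw [abs_of_neg h0] at h
          exfalso; linarith
    · push_neg at hφ
      refine ⟨φ - π - L, φ - π + L, φ - L, φ + L, ?_, by linarith, by linarith⟩
      intro θ hθ
      have hθ0 := hθ.1.1; have hθπ := hθ.1.2
      rcases main θ hθ with h | h
      · rcases abs_le.1 h with ⟨h1, h2⟩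
        exact Or.inr ⟨by linarith, by linarith⟩
      · rcases le_or_gt 0 (θ - φ) with h0 | h0
        · rw [abs_of_nonneg h0] at h
          exfalso; linarith
        · rw [abs_of_neg h0] at h
          exact Or.inl ⟨by linarith, by linarith⟩

lemma nrm_projVperp (θ : ℝ) (p : Pt) : nrm (projVperp θ p) = |dotP p (ieV θ)| := by
  simp only [projVperp, nrm, ieV, Prod.smul_mk, smul_eq_mul]
  rw [show (dotP p (-Real.sin θ, Real.cos θ) * -Real.sin θ) ^ 2 +
      (dotP p (-Real.sin θ, Real.cos θ) * Real.cos θ) ^ 2 =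
      (dotP p (-Real.sin θ, Real.cos θ)) ^ 2 * ((Real.sin θ) ^ 2 + (Real.cos θ) ^ 2) by ring,
    Real.sin_sq_add_cos_sq, mul_one, Real.sqrt_sq_eq_abs]

lemma nrm_pos_s15 {p : Pt} (hp : p ≠ 0) : 0 < nrm p := by
  have h : p.1 ≠ 0 ∨ p.2 ≠ 0 := by
    by_contra h
    push_neg at h
    exact hp (Prod.ext h.1 h.2)
  have : 0 < p.1 ^ 2 + p.2 ^ 2 := by
    rcases h with h | h
    · have : 0 < p.1 ^ 2 := by positivity
      nlinarith [sq_nonneg p.2]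
    · have : 0 < p.2 ^ 2 := by positivity
      nlinarith [sq_nonneg p.1]
  exact Real.sqrt_pos.2 this

lemma angle_exists {p : Pt} (hp : p ≠ 0) :
    ∃ φ : ℝ, 0 ≤ φ ∧ φ < π ∧ ∀ θ : ℝ, |dotP p (ieV θ)| = nrm p * |Real.sin (θ - φ)| := by
  have hpi := Real.pi_pos
  set w : ℂ := ⟨p.1, p.2⟩ with hw
  have hw0 : w ≠ 0 := by
    intro h
    apply hp
    have h1 : w.re = 0 := by rw [h]; simp
    have h2 : w.im = 0 := by rw [h]; simp
    exact Prod.ext h1 h2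
  have habs : ‖w‖ = nrm p := by
    rw [Complex.norm_def, Complex.normSq_mk, nrm]
    ring_nf
  have hcos : p.1 = nrm p * Real.cos w.arg := by
    rw [Complex.cos_arg hw0, habs]
    field_simp [(nrm_pos_s15 hp).ne']
    rfl
  have hsin : p.2 = nrm p * Real.sin w.arg := by
    rw [Complex.sin_arg, habs]
    field_simp [(nrm_pos_s15 hp).ne']
    rfl
  have key : ∀ θ : ℝ, |dotP p (ieV θ)| = nrm p * |Real.sin (θ - w.arg)| := by
    intro θ
    have : dotP p (ieV θ) = nrm p * Real.sin (w.arg - θ) := by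
      simp only [dotP, ieV]
      rw [hcos, hsin, Real.sin_sub]
      ring
    rw [this, abs_mul, abs_of_nonneg (nrm_pos_s15 hp).le,
      show w.arg - θ = -(θ - w.arg) by ring, Real.sin_neg, abs_neg]
  obtain ⟨h1, h2⟩ := Complex.arg_mem_Ioc w
  rcases lt_or_ge w.arg 0 with h | h
  · refine ⟨w.arg + π, by linarith, by linarith, fun θ => ?_⟩
    rw [key θ, show θ - (w.arg + π) = (θ - w.arg) - π by ring, Real.sin_sub_pi, abs_neg]
  · rcases lt_or_ge w.arg π with h' | h'
    · exact ⟨w.arg, h, h', key⟩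
    · have hπ : w.arg = π := le_antisymm h2 h'
      refine ⟨0, le_refl 0, hpi, fun θ => ?_⟩
      rw [key θ, hπ, Real.sin_sub_pi, abs_neg, sub_zero]

lemma projVperp_sub (θ : ℝ) (z ζ : Pt) :
    projVperp θ z - projVperp θ ζ = projVperp θ (z - ζ) := by
  simp only [projVperp, dotP, Prod.fst_sub, Prod.snd_sub, ← sub_smul]
  congr 1
  ring

lemma rpow_quarter_pow (X : ℝ) (hX : 0 ≤ X) : (X ^ 4) ^ ((1 : ℝ) / 4) = X := by
  rw [← Real.rpow_natCast X 4, ← Real.rpow_mul hX]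
  norm_num

lemma nrm_le_dH (v w : Heis) : nrm (v.1 - w.1) ≤ dH v w := by
  have h := Real.rpow_le_rpow (by positivity : (0:ℝ) ≤ (nrm (v.1 - w.1)) ^ 4)
    (by nlinarith [sq_nonneg (v.2 - w.2 - 2 * wedge v.1 w.1)] :
      (nrm (v.1 - w.1)) ^ 4 ≤ (nrm (v.1 - w.1)) ^ 4 + (v.2 - w.2 - 2 * wedge v.1 w.1) ^ 2)
    (by norm_num : (0:ℝ) ≤ (1:ℝ)/4)
  rw [rpow_quarter_pow (nrm (v.1 - w.1)) (Real.sqrt_nonneg _)] at h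
  exact h

lemma part_one {p : Pt} (hp : p ≠ 0) {δ : ℝ} (hδ : 0 < δ) :
    ∃ a₁ b₁ a₂ b₂ : ℝ,
      {θ ∈ Set.Ico 0 π | nrm (projVperp θ p) ≤ δ} ⊆ Set.Icc a₁ b₁ ∪ Set.Icc a₂ b₂ ∧
      b₁ - a₁ ≤ 2 * π * δ / nrm p ∧ b₂ - a₂ ≤ 2 * π * δ / nrm p := by
  obtain ⟨φ, hφ0, hφπ, hφ⟩ := angle_exists hp
  have hr := nrm_pos_s15 hp
  obtain ⟨a₁, b₁, a₂, b₂, hsub, hl1, hl2⟩ :=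
    key_cover φ (δ / nrm p) hφ0 hφπ (by positivity)
  have hset : {θ ∈ Set.Ico 0 π | nrm (projVperp θ p) ≤ δ} =
      {θ ∈ Set.Ico 0 π | |Real.sin (θ - φ)| ≤ δ / nrm p} := by
    ext θ
    simp only [Set.mem_setOf_eq, and_congr_right_iff]
    intro _
    rw [nrm_projVperp, hφ θ, le_div_iff₀ hr, mul_comm]
  refine ⟨a₁, b₁, a₂, b₂, hset ▸ hsub, ?_, ?_⟩
  · calc b₁ - a₁ ≤ 2 * π * (δ / nrm p) := hl1
    _ = 2 * π * δ / nrm p := by ring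
  · calc b₂ - a₂ ≤ 2 * π * (δ / nrm p) := hl2
    _ = 2 * π * δ / nrm p := by ring

/-- The easy case of the transversality lemma, when |z−ζ| ≥ |t−τ−2z∧ζ|^{1/2}. -/
theorem stmt_15 :
    ∃ C : ℝ, 0 < C ∧ ∀ z ζ : Pt, ∀ t τ δ : ℝ, 0 < δ → z ≠ ζ →
      nrm (z - ζ) ≥ |t - τ - 2 * wedge z ζ| ^ ((1 : ℝ) / 2) →
      (∃ a₁ b₁ a₂ b₂ : ℝ,
        {θ ∈ Set.Ico 0 Real.pi | nrm (projVperp θ (z - ζ)) ≤ δ} ⊆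
          Set.Icc a₁ b₁ ∪ Set.Icc a₂ b₂ ∧
        b₁ - a₁ ≤ C * δ / nrm (z - ζ) ∧ b₂ - a₂ ≤ C * δ / nrm (z - ζ)) ∧
      (∃ a₁ b₁ a₂ b₂ : ℝ,
        {θ ∈ Set.Ico 0 Real.pi |
            dH (PVperp θ (z, t)) (PVperp θ (ζ, τ)) ≤ δ} ⊆
          Set.Icc a₁ b₁ ∪ Set.Icc a₂ b₂ ∧
        b₁ - a₁ ≤ C * δ / dH (z, t) (ζ, τ) ∧ b₂ - a₂ ≤ C * δ / dH (z, t) (ζ, τ)) := by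
  refine ⟨16, by norm_num, fun z ζ t τ δ hδ hzζ hyp => ?_⟩
  have hpi := Real.pi_pos
  have hpi4 := Real.pi_le_four
  have hp : z - ζ ≠ 0 := sub_ne_zero.2 hzζ
  have hr := nrm_pos_s15 hp
  set r := nrm (z - ζ) with hrdef
  obtain ⟨a₁, b₁, a₂, b₂, hsub, hl1, hl2⟩ := part_one hp hδ
  have h2πδ : 2 * π * δ / r ≤ 16 * δ / r :=
    (div_le_div_iff_of_pos_right hr).2 (by nlinarith)
  set c := t - τ - 2 * wedge z ζ with hcdef
  have hc : |c| ≤ r ^ 2 := by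
    rw [← Real.sqrt_eq_rpow] at hyp
    calc |c| = Real.sqrt |c| ^ 2 := (Real.sq_sqrt (abs_nonneg c)).symm
    _ ≤ r ^ 2 := pow_le_pow_left₀ (Real.sqrt_nonneg _) hyp 2
  have hc2 : c ^ 2 ≤ r ^ 4 := by
    have := pow_le_pow_left₀ (abs_nonneg c) hc 2
    rw [sq_abs] at this
    nlinarith
  have hdHeq : dH (z, t) (ζ, τ) = (r ^ 4 + c ^ 2) ^ ((1 : ℝ) / 4) := rfl
  have hdHpos : 0 < dH (z, t) (ζ, τ) := by
    rw [hdHeq]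
    exact Real.rpow_pos_of_pos (by positivity) _
  have hdHle : dH (z, t) (ζ, τ) ≤ 2 * r := by
    rw [hdHeq]
    have h1 : r ^ 4 + c ^ 2 ≤ (2 * r) ^ 4 := by nlinarith [pow_pos hr 4]
    calc (r ^ 4 + c ^ 2) ^ ((1 : ℝ) / 4) ≤ ((2 * r) ^ 4) ^ ((1 : ℝ) / 4) :=
      Real.rpow_le_rpow (by positivity) h1 (by norm_num)
    _ = 2 * r := rpow_quarter_pow (2 * r) (by positivity)
  have hconv : 2 * π * δ / r ≤ 16 * δ / dH (z, t) (ζ, τ) := by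
    rw [div_le_div_iff₀ hr hdHpos]
    nlinarith [mul_le_mul_of_nonneg_left hdHle (by positivity : (0:ℝ) ≤ 2 * π * δ),
      mul_pos hδ hr, mul_pos hpi (mul_pos hδ hr)]
  constructor
  · exact ⟨a₁, b₁, a₂, b₂, hsub, hl1.trans h2πδ, hl2.trans h2πδ⟩
  · refine ⟨a₁, b₁, a₂, b₂, ?_, hl1.trans hconv, hl2.trans hconv⟩
    intro θ hθ
    apply hsub
    refine ⟨hθ.1, ?_⟩
    have h := nrm_le_dH (PVperp θ (z, t)) (PVperp θ (ζ, τ))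
    have heq : (PVperp θ (z, t)).1 - (PVperp θ (ζ, τ)).1 = projVperp θ (z - ζ) :=
      projVperp_sub θ z ζ
    rw [heq] at h
    exact h.trans hθ.2
end
end

section
/- Let X, Y be metric spaces with X compact and Y separable, μ a finite Borel measure on X, ν a nonzero finite compactly supported Borel measure on Y, and (θ,y) ↦ π_θ(y) a continuous map X × Y → Y. Given s > 0, suppose there exist η, δ₀ > 0 such that for all δ ∈ (0,δ₀): ν{y ∈ Y : μ{θ ∈ X : π_{θ#}ν(B(π_θ(y),δ)) ≥ δ^s} ≥ δ^η} ≤ δ^η. Then for μ-a.e. θ ∈ X, the Hausdorff dimension of π_θ(supp ν) is at least s. -/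
open MeasureTheory

noncomputable section

/-- The support of a Borel measure on a metric space: points all of whose
neighbourhoods have positive measure. -/
def measSupp {Y : Type} [MetricSpace Y] [MeasurableSpace Y] (ν : Measure Y) : Set Y :=
  {y : Y | ∀ r : ℝ, 0 < r → 0 < ν (Metric.ball y r)}

section AuxLemmas

open Metric Filter Set
open scoped ENNReal NNReal

/-- In a separable metric space, the complement of the measure support is null. -/
lemma aux_supp_null {Y : Type} [MetricSpace Y] [TopologicalSpace.SeparableSpace Y]
    [MeasurableSpace Y] [BorelSpace Y] (ν : Measure Y) :
    ν {y : Y | ∀ r : ℝ, 0 < r → 0 < ν (Metric.ball y r)}ᶜ = 0 := by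
  obtain ⟨D, hDc, hDd⟩ := TopologicalSpace.exists_countable_dense Y
  have hsub : {y : Y | ∀ r : ℝ, 0 < r → 0 < ν (Metric.ball y r)}ᶜ ⊆
      ⋃ z ∈ D, ⋃ q : ℚ, ⋃ (_ : ν (Metric.ball z (q : ℝ)) = 0), Metric.ball z (q : ℝ) := by
    intro y hy
    simp only [mem_compl_iff, mem_setOf_eq, not_forall] at hy
    obtain ⟨r, hr, hball⟩ := hy
    have hball0 : ν (Metric.ball y r) = 0 := by
      simpa using hball
    obtain ⟨z, hzD, hzy⟩ := hDd.exists_dist_lt y (by positivity : (0:ℝ) < r/4)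
    obtain ⟨q, hq1, hq2⟩ := exists_rat_btwn (by linarith : r/4 < r/2)
    have hyz : y ∈ Metric.ball z (q : ℝ) := by
      rw [Metric.mem_ball, dist_comm]
      calc dist z y = dist y z := dist_comm z y
        _ < r/4 := hzy
        _ < q := hq1
    have hsubball : Metric.ball z (q : ℝ) ⊆ Metric.ball y r := by
      intro w hw
      rw [Metric.mem_ball] at hw ⊢
      calc dist w y ≤ dist w z + dist z y := dist_triangle w z y
        _ < q + r/4 := by rw [dist_comm z y]; gcongr
        _ < r/2 + r/4 := by gcongr
        _ ≤ r := by linarith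
    have hq0 : ν (Metric.ball z (q : ℝ)) = 0 :=
      measure_mono_null hsubball hball0
    exact mem_biUnion hzD (mem_iUnion.2 ⟨q, mem_iUnion.2 ⟨hq0, hyz⟩⟩)
  refine measure_mono_null hsub ?_
  refine (measure_biUnion_null_iff hDc).2 fun z _ => ?_
  refine measure_iUnion_null_iff.2 fun q => ?_
  by_cases hq : ν (Metric.ball z (q : ℝ)) = 0 <;> simp [hq]

lemma aux_meas {X Y : Type} [MetricSpace X] [SecondCountableTopology X]
    [MetricSpace Y] [SecondCountableTopology Y]
    [MeasurableSpace X] [BorelSpace X] [MeasurableSpace Y] [BorelSpace Y]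
    (ν : Measure Y) [SFinite ν] (π : X → Y → Y)
    (hπ : Continuous fun p : X × Y => π p.1 p.2) (δ : ℝ) :
    Measurable fun p : X × Y => ν (π p.1 ⁻¹' Metric.closedBall (π p.1 p.2) δ) := by
  have hset : MeasurableSet {q : (X × Y) × Y | dist (π q.1.1 q.2) (π q.1.1 q.1.2) ≤ δ} := by
    apply IsClosed.measurableSet
    apply isClosed_le _ continuous_const
    have h1 : Continuous fun q : (X × Y) × Y => π q.1.1 q.2 :=
      hπ.comp (continuous_fst.fst.prodMk continuous_snd)
    have h2 : Continuous fun q : (X × Y) × Y => π q.1.1 q.1.2 :=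
      hπ.comp continuous_fst
    exact h1.dist h2
  exact measurable_measure_prodMk_left (ν := ν) hset

/-- Mass distribution principle. -/
lemma aux_mass {Y : Type} [MetricSpace Y] [MeasurableSpace Y] [BorelSpace Y]
    (ρ : Measure Y) (A : Set Y)
    (t : ℝ) (ε : ℝ≥0∞) (hε : 0 < ε)
    (hA : ∀ U : Set Y, (U ∩ A).Nonempty → EMetric.diam U ≤ ε → ρ (U ∩ A) ≤ EMetric.diam U ^ t) :
    ρ A ≤ μH[t] A := by
  rw [Measure.hausdorffMeasure_apply]
  refine le_iSup₂_of_le ε hε ?_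
  refine le_iInf fun U => le_iInf fun hUc => le_iInf fun hUd => ?_
  calc ρ A ≤ ∑' n, ρ (U n ∩ A) := by
        refine le_trans (measure_mono ?_) (measure_iUnion_le _)
        intro x hx
        obtain ⟨n, hn⟩ := mem_iUnion.1 (hUc hx)
        exact mem_iUnion.2 ⟨n, hn, hx⟩
    _ ≤ ∑' n, ⨆ _ : (U n).Nonempty, EMetric.diam (U n) ^ t := by
        refine ENNReal.tsum_le_tsum fun n => ?_
        rcases (U n ∩ A).eq_empty_or_nonempty with he | hne
        · simp [he]
        · have hnU : (U n).Nonempty := hne.mono inter_subset_left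
          rw [iSup_pos hnU]
          exact hA (U n) hne (hUd n)

lemma aux_geom_eq (c e : ℝ) (hc : 0 ≤ c) (k : ℕ) :
    (c * 2⁻¹ ^ k) ^ e = c ^ e * ((2:ℝ)⁻¹ ^ e) ^ k := by
  rw [Real.mul_rpow hc (by positivity), ← Real.rpow_natCast (2⁻¹:ℝ) k,
    ← Real.rpow_natCast ((2⁻¹:ℝ) ^ e) k, ← Real.rpow_mul (by norm_num),
    ← Real.rpow_mul (by norm_num), mul_comm (k:ℝ) e]

lemma aux_geom_summable (c e : ℝ) (hc : 0 ≤ c) (he : 0 < e) :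
    Summable (fun k : ℕ => (c * 2⁻¹ ^ k) ^ e) := by
  have h1 : (0:ℝ) ≤ (2:ℝ)⁻¹ ^ e := by positivity
  have h2 : ((2:ℝ)⁻¹) ^ e < 1 :=
    Real.rpow_lt_one (by norm_num) (by norm_num) he
  have := (summable_geometric_of_lt_one h1 h2).mul_left (c ^ e)
  refine this.congr fun k => ?_
  rw [aux_geom_eq c e hc]

lemma aux_geom_tendsto (c e : ℝ) (hc : 0 ≤ c) (he : 0 < e) :
    Tendsto (fun k : ℕ => (c * 2⁻¹ ^ k) ^ e) atTop (nhds 0) := by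
  have h1 : (0:ℝ) ≤ (2:ℝ)⁻¹ ^ e := by positivity
  have h2 : ((2:ℝ)⁻¹) ^ e < 1 :=
    Real.rpow_lt_one (by norm_num) (by norm_num) he
  have := (tendsto_pow_atTop_nhds_zero_of_lt_one h1 h2).const_mul (c ^ e)
  rw [mul_zero] at this
  refine this.congr fun k => ?_
  rw [aux_geom_eq c e hc]

lemma aux_real_calc {s t d a : ℝ} (ht : 0 < t) (hts : t < s) (hd : 0 < d)
    (hdτ : d ≤ (2:ℝ)⁻¹ ^ (s / (s - t))) (ha : 0 ≤ a) (had : a ≤ 2 * d) :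
    a ^ s ≤ d ^ t := by
  have hst : 0 < s - t := by linarith
  have hτst : ((2:ℝ)⁻¹ ^ (s / (s - t))) ^ (s - t) = ((2:ℝ) ^ s)⁻¹ := by
    rw [← Real.rpow_mul (by norm_num), div_mul_cancel₀ _ (ne_of_gt hst),
      Real.inv_rpow (by norm_num)]
  calc a ^ s ≤ (2 * d) ^ s := Real.rpow_le_rpow ha had (by linarith)
    _ = 2 ^ s * d ^ s := Real.mul_rpow (by norm_num) hd.le
    _ = 2 ^ s * (d ^ (s - t) * d ^ t) := by
        rw [← Real.rpow_add hd, sub_add_cancel]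
    _ ≤ 2 ^ s * (((2:ℝ)⁻¹ ^ (s / (s - t))) ^ (s - t) * d ^ t) := by
        have := Real.rpow_le_rpow hd.le hdτ hst.le
        gcongr
    _ = d ^ t := by
        rw [hτst, ← mul_assoc, mul_inv_cancel₀ (by positivity), one_mul]

end AuxLemmas

open Metric Filter Set
open scoped ENNReal NNReal

/-- Abstract projection lemma: a quantitative restriction on the failure of the
s-Frostman condition for the pushforwards implies dim π_θ(supp ν) ≥ s for μ-a.e. θ. -/
theorem stmt_16 {X Y : Type} [MetricSpace X] [CompactSpace X]
    [MetricSpace Y] [TopologicalSpace.SeparableSpace Y]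
    [MeasurableSpace X] [BorelSpace X] [MeasurableSpace Y] [BorelSpace Y]
    (μ : Measure X) [IsFiniteMeasure μ]
    (ν : Measure Y) [IsFiniteMeasure ν] (hν : ν ≠ 0)
    (hcs : IsCompact (measSupp ν))
    (π : X → Y → Y) (hπ : Continuous fun p : X × Y => π p.1 p.2)
    (s : ℝ) (hs : 0 < s)
    (η δ₀ : ℝ) (hη : 0 < η) (hδ₀ : 0 < δ₀)
    (h : ∀ δ : ℝ, δ ∈ Set.Ioo 0 δ₀ →
      ν {y : Y | ENNReal.ofReal (δ ^ η) ≤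
          μ {θ : X | ENNReal.ofReal (δ ^ s) ≤
              ν (π θ ⁻¹' Metric.closedBall (π θ y) δ)}} ≤ ENNReal.ofReal (δ ^ η)) :
    ∀ᵐ θ ∂μ, ENNReal.ofReal s ≤ dimH (π θ '' measSupp ν) := by
  classical
  haveI : SecondCountableTopology Y := UniformSpace.secondCountable_of_separable Y
  set K := measSupp ν with hKdef
  have hKnull : ν Kᶜ = 0 := aux_supp_null ν
  have hKpos : 0 < ν K := by
    have huniv : ν Set.univ ≠ 0 := by
      simpa [Measure.measure_univ_eq_zero] using hν
    have hle : ν Set.univ ≤ ν K + ν Kᶜ := by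
      refine le_trans (measure_mono ?_) (measure_union_le _ _)
      intro y _
      by_cases hy : y ∈ K
      · exact Or.inl hy
      · exact Or.inr hy
    rw [hKnull, add_zero] at hle
    exact lt_of_lt_of_le (pos_iff_ne_zero.2 huniv) hle
  set c : ℝ := min δ₀ 1 / 2 with hc
  have hc0 : 0 < c := by
    rw [hc]
    have := lt_min hδ₀ one_pos
    linarith
  have hcδ₀ : c < δ₀ := by
    rw [hc]
    have h1 : min δ₀ 1 ≤ δ₀ := min_le_left _ _
    linarith
  set δf : ℕ → ℝ := fun k => c * 2⁻¹ ^ k with hδfdef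
  have hδfpos : ∀ k, 0 < δf k := fun k => by
    have : (0:ℝ) < 2⁻¹ ^ k := by positivity
    exact mul_pos hc0 this
  have hδfle : ∀ k, δf k ≤ c := fun k => by
    have h1 : (2⁻¹:ℝ) ^ k ≤ 1 := pow_le_one₀ (by norm_num) (by norm_num)
    calc c * 2⁻¹ ^ k ≤ c * 1 := by gcongr
      _ = c := mul_one c
  have hδfmem : ∀ k, δf k ∈ Set.Ioo 0 δ₀ :=
    fun k => ⟨hδfpos k, lt_of_le_of_lt (hδfle k) hcδ₀⟩
  have hδfanti : ∀ {j k : ℕ}, j ≤ k → δf k ≤ δf j := by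
    intro j k hjk
    have : (2⁻¹:ℝ) ^ k ≤ 2⁻¹ ^ j :=
      pow_le_pow_of_le_one (by norm_num) (by norm_num) hjk
    exact mul_le_mul_of_nonneg_left this hc0.le
  have hδfsucc : ∀ k, δf (k+1) * 2 = δf k := fun k => by
    show c * 2⁻¹ ^ (k+1) * 2 = c * 2⁻¹ ^ k
    rw [pow_succ]
    ring
  have hδf0 : Tendsto δf atTop (nhds 0) := by
    have := (tendsto_pow_atTop_nhds_zero_of_lt_one
      (by norm_num : (0:ℝ) ≤ 2⁻¹) (by norm_num : (2⁻¹:ℝ) < 1)).const_mul c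
    rw [mul_zero] at this
    exact this
  have hF : ∀ d : ℝ, Measurable fun p : X × Y =>
      ν (π p.1 ⁻¹' Metric.closedBall (π p.1 p.2) d) :=
    fun d => aux_meas ν π hπ d
  set E : ℕ → Set (X × Y) := fun k =>
    {p : X × Y | ENNReal.ofReal (δf k ^ s) ≤
      ν (π p.1 ⁻¹' Metric.closedBall (π p.1 p.2) (δf k))} with hEdef
  have hEmeas : ∀ k, MeasurableSet (E k) := fun k =>
    measurableSet_le measurable_const (hF (δf k))
  have hEbound : ∀ k, (μ.prod ν) (E k) ≤
      ENNReal.ofReal (δf k ^ η) * (μ Set.univ + ν Set.univ) := by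
    intro k
    rw [Measure.prod_apply_symm (hEmeas k)]
    have hg : Measurable fun y => μ ((fun θ => (θ, y)) ⁻¹' E k) :=
      measurable_measure_prodMk_right (hEmeas k)
    set B : Set Y := {y : Y | ENNReal.ofReal (δf k ^ η) ≤ μ ((fun θ => (θ, y)) ⁻¹' E k)}
      with hBdef
    have hBmeas : MeasurableSet B := measurableSet_le measurable_const hg
    have hBν : ν B ≤ ENNReal.ofReal (δf k ^ η) := h (δf k) (hδfmem k)
    calc ∫⁻ y, μ ((fun θ => (θ, y)) ⁻¹' E k) ∂ν
        ≤ ∫⁻ y, (B.indicator (fun _ => μ Set.univ) y + ENNReal.ofReal (δf k ^ η)) ∂ν := by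
          refine lintegral_mono fun y => ?_
          by_cases hy : y ∈ B
          · rw [Set.indicator_of_mem hy]
            exact le_add_right (measure_mono (subset_univ _))
          · rw [Set.indicator_of_notMem hy, zero_add]
            have : ¬ (ENNReal.ofReal (δf k ^ η) ≤ μ ((fun θ => (θ, y)) ⁻¹' E k)) := hy
            exact (lt_of_not_ge this).le
      _ = μ Set.univ * ν B + ENNReal.ofReal (δf k ^ η) * ν Set.univ := by
          rw [lintegral_add_right _ measurable_const, lintegral_indicator_const hBmeas,
            lintegral_const]
      _ ≤ μ Set.univ * ENNReal.ofReal (δf k ^ η)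
            + ENNReal.ofReal (δf k ^ η) * ν Set.univ := by gcongr
      _ = ENNReal.ofReal (δf k ^ η) * (μ Set.univ + ν Set.univ) := by ring
  have hsum : (∑' k, (μ.prod ν) (E k)) ≠ ⊤ := by
    refine ne_top_of_le_ne_top ?_ (ENNReal.tsum_le_tsum hEbound)
    rw [ENNReal.tsum_mul_right]
    refine ENNReal.mul_ne_top ?_
      (ENNReal.add_ne_top.2 ⟨measure_ne_top μ _, measure_ne_top ν _⟩)
    rw [← ENNReal.ofReal_tsum_of_nonneg (fun k => by positivity)
      (aux_geom_summable c η hc0.le hη)]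
    exact ENNReal.ofReal_ne_top
  have hae : ∀ᵐ p ∂(μ.prod ν), ∀ᶠ k in atTop, p ∉ E k :=
    MeasureTheory.ae_eventually_notMem hsum
  have hae2 := Measure.ae_ae_of_ae_prod hae
  filter_upwards [hae2] with θ hθ
  -- θ fixed
  have hπθ : Continuous (π θ) := hπ.comp (Continuous.prodMk_right θ)
  set G : ℕ → Set Y := fun N => {y : Y | ∀ k, N ≤ k →
      ν (π θ ⁻¹' Metric.closedBall (π θ y) (δf k)) < ENNReal.ofReal (δf k ^ s)} with hGdef
  have hGmono : Monotone fun N => K ∩ G N := by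
    intro N N' hNN' y hy
    exact ⟨hy.1, fun k hk => hy.2 k (le_trans hNN' hk)⟩
  have hGae : ν {y : Y | ∃ N : ℕ, y ∈ G N}ᶜ = 0 := by
    rw [ae_iff] at hθ
    refine measure_mono_null ?_ hθ
    intro y hy
    simp only [mem_compl_iff, mem_setOf_eq, not_exists] at hy
    simp only [mem_setOf_eq]
    intro hev
    rw [eventually_atTop] at hev
    obtain ⟨N, hN⟩ := hev
    refine hy N fun k hk => ?_
    have := hN k hk
    exact lt_of_not_ge this
  have hKG : 0 < ν (⋃ N, K ∩ G N) := by
    have h1 : ν K ≤ ν (⋃ N, K ∩ G N) := by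
      have hsub : K ⊆ (⋃ N, K ∩ G N) ∪ {y : Y | ∃ N : ℕ, y ∈ G N}ᶜ := by
        intro y hy
        by_cases hex : ∃ N, y ∈ G N
        · obtain ⟨N, hNy⟩ := hex
          exact Or.inl (mem_iUnion.2 ⟨N, hy, hNy⟩)
        · exact Or.inr hex
      calc ν K ≤ ν ((⋃ N, K ∩ G N) ∪ {y : Y | ∃ N : ℕ, y ∈ G N}ᶜ) := measure_mono hsub
        _ ≤ ν (⋃ N, K ∩ G N) + ν {y : Y | ∃ N : ℕ, y ∈ G N}ᶜ := measure_union_le _ _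
        _ = ν (⋃ N, K ∩ G N) := by rw [hGae, add_zero]
    exact lt_of_lt_of_le hKpos h1
  obtain ⟨N, hN⟩ : ∃ N, 0 < ν (K ∩ G N) := by
    by_contra hcon
    push_neg at hcon
    simp only [le_zero_iff] at hcon
    rw [hGmono.measure_iUnion] at hKG
    simp [hcon] at hKG
  have hdim : ∀ t : ℝ, 0 < t → t < s → ENNReal.ofReal t ≤ dimH (π θ '' K) := by
    intro t ht hts
    set ρ := ν.map (π θ) with hρdef
    set τ : ℝ := (2:ℝ)⁻¹ ^ (s / (s - t)) with hτdef
    have hτ0 : 0 < τ := Real.rpow_pos_of_pos (by norm_num) _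
    obtain ⟨M, hMN, hMτ⟩ : ∃ M, N ≤ M ∧ δf M ≤ τ := by
      have hev : ∀ᶠ k in atTop, δf k < τ := hδf0.eventually (gt_mem_nhds hτ0)
      obtain ⟨M, hM1, hM2⟩ := ((eventually_ge_atTop N).and hev).exists
      exact ⟨M, hM1, hM2.le⟩
    have hballk : ∀ y ∈ G N, ∀ k, N ≤ k →
        ρ (Metric.closedBall (π θ y) (δf k)) < ENNReal.ofReal (δf k ^ s) := by
      intro y hy k hk
      rw [hρdef, Measure.map_apply hπθ.measurable measurableSet_closedBall]
      exact hy k hk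
    have hsing : ∀ y ∈ G N, ρ {π θ y} = 0 := by
      intro y hy
      have hle : ∀ k, k ≥ N → ρ {π θ y} ≤ ENNReal.ofReal (δf k ^ s) := by
        intro k hk
        refine le_trans (measure_mono ?_) (hballk y hy k hk).le
        rw [singleton_subset_iff]
        exact Metric.mem_closedBall_self (hδfpos k).le
      have htend0 : Tendsto (fun k : ℕ => ENNReal.ofReal (δf k ^ s)) atTop (nhds 0) := by
        rw [show (0:ℝ≥0∞) = ENNReal.ofReal 0 by simp]
        exact (ENNReal.continuous_ofReal.tendsto 0).comp (aux_geom_tendsto c s hc0.le hs)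
      have := ge_of_tendsto htend0 (eventually_atTop.2 ⟨N, hle⟩)
      exact le_zero_iff.1 this
    set A := π θ '' (K ∩ G N) with hAdef
    have hmassHyp : ∀ U : Set Y, (U ∩ A).Nonempty →
        EMetric.diam U ≤ ENNReal.ofReal (δf M) →
        ρ (U ∩ A) ≤ EMetric.diam U ^ t := by
      intro U hUne hUd
      obtain ⟨x, hxU, hxA⟩ := hUne
      obtain ⟨y, hyKG, hxy⟩ := hxA
      have hyG : y ∈ G N := hyKG.2
      have hdfin : EMetric.diam U ≠ ⊤ := (lt_of_le_of_lt hUd ENNReal.ofReal_lt_top).ne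
      set d : ℝ := (EMetric.diam U).toReal with hddef
      have hd0 : 0 ≤ d := ENNReal.toReal_nonneg
      have hdle : d ≤ δf M := ENNReal.toReal_le_of_le_ofReal (hδfpos M).le hUd
      have hdiam_eq : EMetric.diam U = ENNReal.ofReal d := (ENNReal.ofReal_toReal hdfin).symm
      have hUsub : U ⊆ Metric.closedBall x d := by
        intro z hz
        rw [Metric.mem_closedBall, dist_edist]
        exact ENNReal.toReal_mono hdfin (EMetric.edist_le_diam_of_mem hz hxU)
      rcases eq_or_lt_of_le hd0 with hd00 | hdpos
      · have hU1 : U ⊆ {x} := by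
          refine hUsub.trans ?_
          rw [← hd00]
          intro z hz
          simp only [Metric.mem_closedBall] at hz
          simp only [mem_singleton_iff]
          exact dist_le_zero.1 hz
        have hz : ρ (U ∩ A) = 0 := by
          refine measure_mono_null (inter_subset_left.trans hU1) ?_
          rw [← hxy]
          exact hsing y hyG
        rw [hz]
        exact zero_le
      · have hfind : ∃ j, δf j < d := (hδf0.eventually (gt_mem_nhds hdpos)).exists
        have hjspec : δf (Nat.find hfind) < d := Nat.find_spec hfind
        have hMj : M < Nat.find hfind := by
          by_contra hle'
          push_neg at hle'
          exact absurd (lt_of_le_of_lt (hδfanti hle') hjspec) (not_lt.2 hdle)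
        set k := Nat.find hfind - 1 with hkdef
        have hkj : Nat.find hfind = k + 1 := by omega
        have hMk : M ≤ k := by omega
        have hNk : N ≤ k := le_trans hMN hMk
        have hdk : d ≤ δf k := le_of_not_gt (Nat.find_min hfind (by omega))
        have h2d : δf k ≤ 2 * d := by
          have hsucc := hδfsucc k
          rw [← hkj] at hsucc
          nlinarith [hjspec]
        have hreal : δf k ^ s ≤ d ^ t :=
          aux_real_calc ht hts hdpos (le_trans hdle hMτ) (hδfpos k).le h2d
        have hchain : ρ (U ∩ A) < EMetric.diam U ^ t :=
          calc ρ (U ∩ A) ≤ ρ (Metric.closedBall x (δf k)) :=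
                measure_mono (inter_subset_left.trans
                  (hUsub.trans (Metric.closedBall_subset_closedBall hdk)))
            _ < ENNReal.ofReal (δf k ^ s) := by
                rw [← hxy]
                exact hballk y hyG k hNk
            _ ≤ ENNReal.ofReal (d ^ t) := ENNReal.ofReal_le_ofReal hreal
            _ = EMetric.diam U ^ t := by
                rw [hdiam_eq, ENNReal.ofReal_rpow_of_nonneg hd0 ht.le]
        exact hchain.le
    have hmass := aux_mass ρ A t (ENNReal.ofReal (δf M))
      (ENNReal.ofReal_pos.2 (hδfpos M)) hmassHyp
    have hρA : ν (K ∩ G N) ≤ ρ A := by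
      refine le_trans (measure_mono (subset_preimage_image (π θ) _)) ?_
      exact Measure.le_map_apply hπθ.measurable.aemeasurable A
    have hHpos : μH[((t.toNNReal : ℝ≥0) : ℝ)] (π θ '' K) ≠ 0 := by
      rw [Real.coe_toNNReal t ht.le]
      have h1 : 0 < μH[t] A := lt_of_lt_of_le (lt_of_lt_of_le hN hρA) hmass
      have h2 : μH[t] A ≤ μH[t] (π θ '' K) := measure_mono (image_mono inter_subset_left)
      exact (lt_of_lt_of_le h1 h2).ne'
    have hfin := le_dimH_of_hausdorffMeasure_ne_zero hHpos
    have hcoe : ENNReal.ofReal t = ((t.toNNReal : ℝ≥0) : ℝ≥0∞) := rfl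
    rw [hcoe]
    exact hfin
  refine le_of_forall_lt_imp_le_of_dense fun e he => ?_
  have hetop : e ≠ ⊤ := (lt_of_lt_of_le he le_top).ne
  set t : ℝ := max e.toReal (s/2) with htdef
  have ht0 : 0 < t := lt_of_lt_of_le (by positivity : (0:ℝ) < s/2) (le_max_right _ _)
  have hts : t < s := by
    have h1 : e.toReal < s := by
      by_contra hcon
      push_neg at hcon
      have : ENNReal.ofReal s ≤ e := by
        rw [← ENNReal.ofReal_toReal hetop]
        exact ENNReal.ofReal_le_ofReal hcon
      exact absurd he (not_lt.2 this)
    have h2 : s/2 < s := by linarith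
    exact max_lt h1 h2
  refine le_trans ?_ (hdim t ht0 hts)
  calc e = ENNReal.ofReal e.toReal := (ENNReal.ofReal_toReal hetop).symm
    _ ≤ ENNReal.ofReal t := ENNReal.ofReal_le_ofReal (le_max_left _ _)
end
end
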